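/- Let φ_ψ : ℝ^d → ℝ^{d_L} be a leaky-ReLU network with leak coefficient α ∈ (0,1), nonincreasing widths d ≥ d_1 ≥ ⋯ ≥ d_L ≥ 1, and parameters ψ ∈ Ψ^κ_1 (every weight matrix W^l has operator norm 1 and condition number at most κ < ∞). Then the set N_ψ = { X ∈ ℝ^d : there exist l ∈ {1,…,L} and k ∈ {1,…,d_l} with (h^l_ψ(X))_k = 0 } of inputs at which some intermediate pre-activation vanishes has Lebesgue measure zero. -/

import Mathlib

open MeasureTheory

noncomputable section

/-- Reinterpret a plain vector `Fin n → ℝ` as a point of Euclidean space (`ℓ²` norm). -/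
def toE {n : ℕ} (x : Fin n → ℝ) : EuclideanSpace ℝ (Fin n) := WithLp.toLp 2 x

/-- Leaky-ReLU with leak coefficient `α`: `σ(t) = t` for `t > 0` and `αt` for `t ≤ 0`. -/
def lrelu (α t : ℝ) : ℝ := if 0 < t then t else α * t

/-- Elementwise leaky-ReLU on `ℝⁿ`. -/
def lreluVec (α : ℝ) {n : ℕ} (x : EuclideanSpace ℝ (Fin n)) : EuclideanSpace ℝ (Fin n) :=
  WithLp.toLp 2 (fun k => lrelu α (x k))

/-- The leaky-ReLU network: `h⁰(X) = X`, `hˡ(X) = Wˡ σ_{l-1}(h^{l-1}(X)) + bˡ`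
(with `σ₀ = id` and `σ_l` the elementwise leaky-ReLU for `l ≥ 1`); here `W l`, `b l`
denote the weights/biases of layer `l + 1`, and `net α dims W b l` is `hˡ`. -/
def net (α : ℝ) (dims : ℕ → ℕ)
    (W : ∀ l : ℕ, Matrix (Fin (dims (l + 1))) (Fin (dims l)) ℝ)
    (b : ∀ l : ℕ, EuclideanSpace ℝ (Fin (dims (l + 1)))) :
    (l : ℕ) → EuclideanSpace ℝ (Fin (dims 0)) → EuclideanSpace ℝ (Fin (dims l))
  | 0, X => X
  | (l + 1), X =>
      toE ((W l).mulVec (if l = 0 then net α dims W b l X else lreluVec α (net α dims W b l X)))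
        + b l

/-- The (Euclidean) operator norm `σ_max(W) = sup_{x ≠ 0} ‖Wx‖/‖x‖`. -/
def opNorm {m n : ℕ} (W : Matrix (Fin m) (Fin n) ℝ) : ℝ :=
  sSup {r : ℝ | ∃ x : EuclideanSpace ℝ (Fin n), x ≠ 0 ∧ r = ‖toE (W.mulVec x)‖ / ‖x‖}

/-- The smallest singular value of a (possibly wide) matrix `W : ℝ^{m×n}` with `m ≤ n`,
computed through its transpose: `σ_min(W) = inf_{y ≠ 0} ‖Wᵀy‖/‖y‖`. -/
def sigmaMin {m n : ℕ} (W : Matrix (Fin m) (Fin n) ℝ) : ℝ :=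
  sInf {r : ℝ | ∃ y : EuclideanSpace ℝ (Fin m), y ≠ 0 ∧ r = ‖toE (W.transpose.mulVec y)‖ / ‖y‖}

/-- Condition number `cond(W) = σ_max(W)/σ_min(W)` of a full-rank matrix. -/
def condNum {m n : ℕ} (W : Matrix (Fin m) (Fin n) ℝ) : ℝ := opNorm W / sigmaMin W

/-! ### Auxiliary lemmas -/

open Measure Module
open scoped NNReal ENNReal

/-- Two additive Haar measures on a finite-dimensional real vector space have the same
null sets. -/
lemma haar_null_of_null {G : Type*} [NormedAddCommGroup G] [NormedSpace ℝ G]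
    [MeasurableSpace G] [BorelSpace G] [FiniteDimensional ℝ G]
    (μ ν : Measure G) [IsAddHaarMeasure μ] [IsAddHaarMeasure ν]
    {s : Set G} (hs : μ s = 0) : ν s = 0 := by
  rw [isAddLeftInvariant_eq_smul ν μ]
  simp [hs]

/-- The preimage of a null set under an antilipschitz self-map of Euclidean space is null. -/
lemma antilip_preimage_null {n : ℕ} {f : EuclideanSpace ℝ (Fin n) → EuclideanSpace ℝ (Fin n)}
    {K : ℝ≥0} (hf : AntilipschitzWith K f) {s : Set (EuclideanSpace ℝ (Fin n))}
    (hs : volume s = 0) : volume (f ⁻¹' s) = 0 := by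
  set d : ℝ := (finrank ℝ (EuclideanSpace ℝ (Fin n)) : ℝ) with hd
  have h1 : (μH[d] : Measure (EuclideanSpace ℝ (Fin n))) s = 0 := haar_null_of_null volume _ hs
  have hd0 : 0 ≤ d := hd ▸ Nat.cast_nonneg _
  have h2 := hf.hausdorffMeasure_preimage_le hd0 s
  rw [h1, mul_zero] at h2
  exact haar_null_of_null (μH[d]) volume (le_antisymm h2 zero_le)

/-- The preimage of a null set under a surjective linear map between Euclidean spaces is null. -/
lemma surj_linear_preimage_null {n m : ℕ}
    (L : EuclideanSpace ℝ (Fin n) →ₗ[ℝ] EuclideanSpace ℝ (Fin m))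
    (hL : Function.Surjective L) {s : Set (EuclideanSpace ℝ (Fin m))} (hs : volume s = 0) :
    volume (L ⁻¹' s) = 0 := by
  obtain ⟨t, hst, htm, ht⟩ := exists_measurable_superset_of_null hs
  obtain ⟨c, -, hc⟩ := L.exists_map_addHaar_eq_smul_addHaar volume volume hL
  have hmeas : Measurable L := L.continuous_of_finiteDimensional.measurable
  refine measure_mono_null (Set.preimage_mono hst) ?_
  have h : volume (L ⁻¹' t) = (volume.map L) t := (Measure.map_apply hmeas htm).symm
  rw [h, hc]
  simp [ht]

/-- Coordinate hyperplanes in Euclidean space are null. -/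
lemma hyperplane_null {m : ℕ} (k : Fin m) :
    volume {y : EuclideanSpace ℝ (Fin m) | y k = 0} = 0 := by
  set φ : EuclideanSpace ℝ (Fin m) →ₗ[ℝ] ℝ :=
    (LinearMap.proj k).comp (WithLp.linearEquiv 2 ℝ (Fin m → ℝ)).toLinearMap with hφ
  have hker : {y : EuclideanSpace ℝ (Fin m) | y k = 0}
      = (LinearMap.ker φ : Set (EuclideanSpace ℝ (Fin m))) := by
    ext y; simp [φ, LinearMap.mem_ker]
  rw [hker]
  refine Measure.addHaar_submodule volume _ ?_
  intro h
  have h1 : φ (EuclideanSpace.single k 1) = 0 := by rw [← LinearMap.mem_ker, h]; trivial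
  simp [φ, EuclideanSpace.single_apply] at h1

/-- `lrelu α` expands distances by at least a factor `α`. -/
lemma lrelu_lower {α : ℝ} (hα0 : 0 < α) (hα1 : α < 1) (s t : ℝ) :
    α * |s - t| ≤ |lrelu α s - lrelu α t| := by
  have key : ∀ u v : ℝ, v ≤ u → α * (u - v) ≤ lrelu α u - lrelu α v := by
    intro u v huv
    unfold lrelu
    split_ifs <;> nlinarith
  rcases le_total t s with h | h
  · rw [abs_of_nonneg (by linarith), abs_of_nonneg (by nlinarith [key s t h])]
    exact key s t h
  · rw [abs_of_nonpos (by linarith), abs_of_nonpos (by nlinarith [key t s h])]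
    have := key t s h; linarith

/-- The elementwise leaky-ReLU is antilipschitz with constant `α⁻¹`. -/
lemma lreluVec_antilip {α : ℝ} (hα0 : 0 < α) (hα1 : α < 1) (n : ℕ) :
    AntilipschitzWith (⟨α, hα0.le⟩ : ℝ≥0)⁻¹ (lreluVec α (n := n)) := by
  apply AntilipschitzWith.of_le_mul_dist
  intro x y
  show dist x y ≤ α⁻¹ * dist (lreluVec α x) (lreluVec α y)
  rw [le_inv_mul_iff₀ hα0]
  rw [EuclideanSpace.dist_eq, EuclideanSpace.dist_eq]
  have hsum : ∀ i : Fin n,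
      α ^ 2 * dist (x i) (y i) ^ 2 ≤ dist (lreluVec α x i) (lreluVec α y i) ^ 2 := by
    intro i
    have h := lrelu_lower hα0 hα1 (x i) (y i)
    have h2 : (α * |x i - y i|) ^ 2 ≤ |lrelu α (x i) - lrelu α (y i)| ^ 2 :=
      pow_le_pow_left₀ (by positivity) h 2
    simpa [Real.dist_eq, lreluVec, mul_pow, sq_abs] using h2
  calc α * Real.sqrt (∑ i, dist (x i) (y i) ^ 2)
      = Real.sqrt (α ^ 2 * ∑ i, dist (x i) (y i) ^ 2) := by
        rw [Real.sqrt_mul (sq_nonneg α), Real.sqrt_sq hα0.le]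
    _ ≤ Real.sqrt (∑ i, dist (lreluVec α x i) (lreluVec α y i) ^ 2) := by
        apply Real.sqrt_le_sqrt
        rw [Finset.mul_sum]
        exact Finset.sum_le_sum fun i _ => hsum i

/-- The linear map of Euclidean spaces induced by a matrix. -/
def matL {n m : ℕ} (A : Matrix (Fin m) (Fin n) ℝ) :
    EuclideanSpace ℝ (Fin n) →ₗ[ℝ] EuclideanSpace ℝ (Fin m) :=
  (WithLp.linearEquiv 2 ℝ (Fin m → ℝ)).symm.toLinearMap ∘ₗ A.mulVecLin ∘ₗ
    (WithLp.linearEquiv 2 ℝ (Fin n → ℝ)).toLinearMap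

/-- A matrix of full row rank induces a surjective linear map. -/
lemma matL_surj {n m : ℕ} (A : Matrix (Fin m) (Fin n) ℝ) (hA : A.rank = m) :
    Function.Surjective (matL A) := by
  have hr : LinearMap.range A.mulVecLin = ⊤ := by
    apply Submodule.eq_top_of_finrank_eq
    rw [← Matrix.rank, hA, finrank_pi]
    simp
  have hs : Function.Surjective A.mulVecLin := LinearMap.range_eq_top.1 hr
  intro y
  obtain ⟨x, hx⟩ := hs ((WithLp.linearEquiv 2 ℝ (Fin m → ℝ)) y)
  exact ⟨(WithLp.linearEquiv 2 ℝ (Fin n → ℝ)).symm x, by simp [matL, hx]⟩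

/-- For a leaky-ReLU network with leak `α ∈ (0,1)`, nonincreasing layer
widths, and normalized well-conditioned full-rank weights (`ψ ∈ Ψ^κ₁`), the set `N_ψ` of
inputs at which some intermediate pre-activation vanishes has Lebesgue measure zero. -/
theorem preactivation_zero_set_null
    (α : ℝ) (hα : α ∈ Set.Ioo (0 : ℝ) 1)
    (L : ℕ) (dims : ℕ → ℕ)
    (hmono : ∀ l < L, dims (l + 1) ≤ dims l) (hdL : 1 ≤ dims L)
    (W : ∀ l : ℕ, Matrix (Fin (dims (l + 1))) (Fin (dims l)) ℝ)
    (b : ∀ l : ℕ, EuclideanSpace ℝ (Fin (dims (l + 1))))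
    (κ : ℝ)
    (hrank : ∀ l < L, (W l).rank = dims (l + 1))
    (hopnorm : ∀ l < L, opNorm (W l) = 1)
    (hcond : ∀ l < L, condNum (W l) ≤ κ) :
    volume {X : EuclideanSpace ℝ (Fin (dims 0)) |
      ∃ l, 1 ≤ l ∧ l ≤ L ∧ ∃ k : Fin (dims l), net α dims W b l X k = 0} = 0 := by
  obtain ⟨hα0, hα1⟩ := hα
  -- preimages of null sets under the network stages are null
  have key : ∀ l, l ≤ L → ∀ s : Set (EuclideanSpace ℝ (Fin (dims l))),
      volume s = 0 → volume (net α dims W b l ⁻¹' s) = 0 := by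
    intro l
    induction l with
    | zero => intro _ s hs; simpa [net, Set.preimage_id] using hs
    | succ l ih =>
      intro hl s hs
      have hlL : l < L := hl
      have hfun : net α dims W b (l + 1) =
          (fun y => y + b l) ∘ (matL (W l)) ∘
            (fun y => if l = 0 then y else lreluVec α y) ∘ net α dims W b l := by
        funext X
        show toE ((W l).mulVec _) + b l = _
        simp only [Function.comp_apply]
        split_ifs <;> simp [matL, toE]
      have h1 : volume ((fun y : EuclideanSpace ℝ (Fin (dims (l + 1))) => y + b l) ⁻¹' s)
          = 0 := by
        rwa [measure_preimage_add_right]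
      have h2 : volume ((matL (W l)) ⁻¹'
          ((fun y : EuclideanSpace ℝ (Fin (dims (l + 1))) => y + b l) ⁻¹' s)) = 0 :=
        surj_linear_preimage_null _ (matL_surj _ (hrank l hlL)) h1
      have h3 : volume ((fun y : EuclideanSpace ℝ (Fin (dims l)) =>
          if l = 0 then y else lreluVec α y) ⁻¹' ((matL (W l)) ⁻¹'
          ((fun y : EuclideanSpace ℝ (Fin (dims (l + 1))) => y + b l) ⁻¹' s))) = 0 := by
        by_cases h0 : l = 0
        · simpa [h0] using h2
        · simp only [if_neg h0]
          exact antilip_preimage_null (lreluVec_antilip hα0 hα1 _) h2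
      rw [hfun, Set.preimage_comp, Set.preimage_comp, Set.preimage_comp]
      exact ih (le_of_lt hlL) _ h3
  refine measure_mono_null ?_ (measure_iUnion_null fun l : Fin (L + 1) =>
    measure_iUnion_null fun k : Fin (dims l) =>
      key l (Nat.lt_succ_iff.1 l.isLt) {y | y k = 0} (hyperplane_null k))
  rintro X ⟨l, hl1, hlL, k, hk⟩
  exact Set.mem_iUnion.2 ⟨⟨l, Nat.lt_succ_of_le hlL⟩, Set.mem_iUnion.2 ⟨k, hk⟩⟩

end
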